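/- Let m, n be natural numbers with m+1 ≤ n ≤ 2m+1 and let a > −1 be real. Then ∫₀^∞ z^(2n)/(z⁴+2a z²+1)^(m+1) dz = (π/(2^(3m+3/2)(1+a)^(m+1/2)))·Σ_{j=0}^{n−m−1} 2^j(1+a)^j·C(2m−2j, m−j)·C(m−n+j, 2j)·C(2j, j)·C(m, j)^(−1). -/

import Mathlib

noncomputable def Apoly (k : ℕ) (w : ℝ) : ℝ :=
  ∑ j ∈ Finset.range (k+1), ((k+j).choose (2*j) : ℝ) * w^(k-j) * (w-1)^(2*j)

lemma pascal2 (N j : ℕ) :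
    (N+2).choose (2*j+2) + N.choose (2*j+2)
      = 2*(N+1).choose (2*j+2) + N.choose (2*j) := by
  have h1 := Nat.choose_succ_succ (N+1) (2*j+1)
  have h3 := Nat.choose_succ_succ N (2*j+1)
  have h2 := Nat.choose_succ_succ N (2*j)
  simp only [Nat.succ_eq_add_one, show 2*j+1+1 = 2*j+2 from rfl,
    show N+1+1 = N+2 from rfl] at h1 h3 h2
  omega

lemma pascal2' (k j : ℕ) :
    ((k+2+(j+1)).choose (2*(j+1)) : ℝ)
      = ((k+1+j).choose (2*j) : ℝ) + 2*((k+1+(j+1)).choose (2*(j+1)) : ℝ)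
        - ((k+(j+1)).choose (2*(j+1)) : ℝ) := by
  have h := pascal2 (k+1+j) j
  have e1 : k+2+(j+1) = k+1+j+2 := by omega
  have e2 : k+1+(j+1) = k+1+j+1 := by omega
  have e3 : k+(j+1) = k+1+j := by omega
  have e4 : 2*(j+1) = 2*j+2 := by omega
  rw [e1, e2, e3, e4]
  have h' : ((k+1+j+2).choose (2*j+2) : ℝ) + ((k+1+j).choose (2*j+2) : ℝ)
      = 2*((k+1+j+1).choose (2*j+2) : ℝ) + ((k+1+j).choose (2*j) : ℝ) := by
    exact_mod_cast congrArg (Nat.cast : ℕ → ℝ) h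
  linarith

lemma peel (d : ℕ → ℝ) (K : ℕ) (w : ℝ) (hd : d 0 = 1) :
    ∑ j ∈ Finset.range (K+2), d j * w^(K+1-j) * (w-1)^(2*j)
      = w^(K+1) + ∑ j ∈ Finset.range (K+1), d (j+1) * w^(K-j) * (w-1)^(2*(j+1)) := by
  rw [Finset.sum_range_succ' (fun j => d j * w^(K+1-j) * (w-1)^(2*j)) (K+1)]
  rw [add_comm]
  congr 1
  · simp [hd]
  · apply Finset.sum_congr rfl
    intro j hj
    simp only [Nat.succ_sub_succ]

lemma Arec (k : ℕ) (w : ℝ) :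
    Apoly (k+2) w = (w^2+1) * Apoly (k+1) w - w^2 * Apoly k w := by
  have hL : Apoly (k+2) w = w^(k+2)
      + ∑ j ∈ Finset.range (k+2), ((k+2+(j+1)).choose (2*(j+1)) : ℝ) * w^(k+1-j) * (w-1)^(2*(j+1)) := by
    unfold Apoly
    exact peel (fun j => ((k+2+j).choose (2*j) : ℝ)) (k+1) w (by simp)
  have hB : w * Apoly (k+1) w = w^(k+2)
      + ∑ j ∈ Finset.range (k+2), ((k+1+(j+1)).choose (2*(j+1)) : ℝ) * w^(k+1-j) * (w-1)^(2*(j+1)) := by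
    have step1 : ∑ j ∈ Finset.range (k+3), ((k+1+j).choose (2*j) : ℝ) * w^(k+2-j) * (w-1)^(2*j)
        = w * Apoly (k+1) w := by
      unfold Apoly
      rw [Finset.sum_range_succ]
      have hz : ((k+1+(k+2)).choose (2*(k+2)) : ℝ) = 0 := by
        norm_cast
        exact Nat.choose_eq_zero_of_lt (by omega)
      rw [hz]
      simp only [zero_mul, mul_zero, add_zero]
      rw [Finset.mul_sum]
      apply Finset.sum_congr rfl
      intro j hj
      simp only [Finset.mem_range] at hj
      have : k+2-j = (k+1-j)+1 := by omega
      rw [this]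
      ring
    rw [← step1]
    exact peel (fun j => ((k+1+j).choose (2*j) : ℝ)) (k+1) w (by simp)
  have hC : w^2 * Apoly k w = w^(k+2)
      + ∑ j ∈ Finset.range (k+2), ((k+(j+1)).choose (2*(j+1)) : ℝ) * w^(k+1-j) * (w-1)^(2*(j+1)) := by
    have step1 : ∑ j ∈ Finset.range (k+3), ((k+j).choose (2*j) : ℝ) * w^(k+2-j) * (w-1)^(2*j)
        = w^2 * Apoly k w := by
      unfold Apoly
      rw [Finset.sum_range_succ, Finset.sum_range_succ]
      have hz1 : ((k+(k+2)).choose (2*(k+2)) : ℝ) = 0 := by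
        norm_cast; exact Nat.choose_eq_zero_of_lt (by omega)
      have hz2 : ((k+(k+1)).choose (2*(k+1)) : ℝ) = 0 := by
        norm_cast; exact Nat.choose_eq_zero_of_lt (by omega)
      rw [hz1, hz2]
      simp only [zero_mul, mul_zero, add_zero]
      rw [Finset.mul_sum]
      apply Finset.sum_congr rfl
      intro j hj
      simp only [Finset.mem_range] at hj
      have : k+2-j = (k-j)+2 := by omega
      rw [this]
      ring
    rw [← step1]
    exact peel (fun j => ((k+j).choose (2*j) : ℝ)) (k+1) w (by simp)
  have hD : (w-1)^2 * Apoly (k+1) w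
      = ∑ j ∈ Finset.range (k+2), ((k+1+j).choose (2*j) : ℝ) * w^(k+1-j) * (w-1)^(2*(j+1)) := by
    unfold Apoly
    rw [Finset.mul_sum]
    apply Finset.sum_congr rfl
    intro j hj
    have : 2*(j+1) = 2*j+2 := by omega
    rw [this, pow_add]
    ring
  have expand : (w^2+1) * Apoly (k+1) w
      = (w-1)^2 * Apoly (k+1) w + 2*(w * Apoly (k+1) w) := by ring
  rw [hL, expand, hD, hB, hC]
  have comb : ∑ j ∈ Finset.range (k+2), ((k+2+(j+1)).choose (2*(j+1)) : ℝ) * w^(k+1-j) * (w-1)^(2*(j+1))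
      = ∑ j ∈ Finset.range (k+2), ((k+1+j).choose (2*j) : ℝ) * w^(k+1-j) * (w-1)^(2*(j+1))
        + (2 * ∑ j ∈ Finset.range (k+2), ((k+1+(j+1)).choose (2*(j+1)) : ℝ) * w^(k+1-j) * (w-1)^(2*(j+1))
        - ∑ j ∈ Finset.range (k+2), ((k+(j+1)).choose (2*(j+1)) : ℝ) * w^(k+1-j) * (w-1)^(2*(j+1))) := by
    rw [Finset.mul_sum, ← Finset.sum_sub_distrib, ← Finset.sum_add_distrib]
    apply Finset.sum_congr rfl
    intro j hj
    rw [pascal2' k j]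
    ring
  rw [comb]
  ring

lemma Aval : ∀ (k : ℕ) (w : ℝ), (w+1) * Apoly k w = w^(2*k+1) + 1 := by
  have key : ∀ (k : ℕ), (∀ w : ℝ, (w+1) * Apoly k w = w^(2*k+1) + 1)
      ∧ (∀ w : ℝ, (w+1) * Apoly (k+1) w = w^(2*(k+1)+1) + 1) := by
    intro k
    induction k with
    | zero =>
      constructor
      · intro w; simp [Apoly]; try ring
      · intro w
        have : Apoly 1 w = w + (w-1)^2 := by
          simp [Apoly, Finset.sum_range_succ]
        rw [this]; ring
    | succ n ih =>
      refine ⟨ih.2, ?_⟩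
      intro w
      rw [show n+1+1 = n+2 from rfl, Arec n w]
      have h1 := ih.1 w
      have h2 := ih.2 w
      have e1 : 2*(n+2)+1 = 2*n+5 := by omega
      have e2 : 2*(n+1)+1 = 2*n+3 := by omega
      rw [e1]
      rw [e2] at h2
      linear_combination (w^2+1) * h2 - w^2 * h1
  intro k
  exact (key k).1

open MeasureTheory Real Set Filter

lemma integrable_pow_div {c : ℝ} (hc : 0 < c) (j l : ℕ) (hj : j ≤ l) :
    Integrable (fun u : ℝ => u^(2*j) / (u^2+c)^(l+1)) := by
  have hpos : ∀ u : ℝ, 0 < u ^ 2 + c := fun u => by positivity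
  have hcont : Continuous (fun u : ℝ => u^(2*j) / (u^2+c)^(l+1)) := by
    apply Continuous.div (by fun_prop) (by fun_prop)
    intro u
    exact pow_ne_zero _ (hpos u).ne'
  set K := (max 1 c⁻¹)^(l+1) with hK
  have hK0 : 0 < K := by
    apply pow_pos
    exact lt_of_lt_of_le one_pos (le_max_left _ _)
  apply Integrable.mono (integrable_inv_one_add_sq.const_mul K) hcont.aestronglyMeasurable
  filter_upwards with u
  have h1 : (0:ℝ) < 1 + u^2 := by positivity
  have h2 : (0:ℝ) < u^2 + c := hpos u
  have hu2 : (0:ℝ) ≤ u^(2*j) := by rw [pow_mul]; positivity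
  have hm1 : (1:ℝ) ≤ max 1 c⁻¹ := le_max_left _ _
  have hm2 : (1:ℝ) ≤ max 1 c⁻¹ * c := by
    calc (1:ℝ) = c⁻¹ * c := by field_simp
    _ ≤ max 1 c⁻¹ * c := by
        apply mul_le_mul_of_nonneg_right (le_max_right _ _) hc.le
  have hstep : 1 + u^2 ≤ max 1 c⁻¹ * (u^2+c) := by nlinarith [sq_nonneg u]
  have key : u^(2*j) * (1+u^2) ≤ K * (u^2+c)^(l+1) := by
    calc u^(2*j) * (1+u^2) = (u^2)^j * (1+u^2) := by rw [pow_mul]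
    _ ≤ (1+u^2)^j * (1+u^2) := by
        apply mul_le_mul_of_nonneg_right _ h1.le
        exact pow_le_pow_left₀ (sq_nonneg u) (by nlinarith [sq_nonneg u]) j
    _ = (1+u^2)^(j+1) := by ring
    _ ≤ (1+u^2)^(l+1) := pow_le_pow_right₀ (by nlinarith [sq_nonneg u]) (by omega)
    _ ≤ (max 1 c⁻¹ * (u^2+c))^(l+1) := pow_le_pow_left₀ h1.le hstep _
    _ = K * (u^2+c)^(l+1) := by rw [hK, mul_pow]
  rw [Real.norm_eq_abs, Real.norm_eq_abs,
    abs_of_nonneg (div_nonneg hu2 (by positivity)),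
    abs_of_nonneg (mul_nonneg hK0.le (by positivity))]
  rw [div_le_iff₀ (by positivity),
    show K * (1+u^2)⁻¹ * (u^2+c)^(l+1) = K * (u^2+c)^(l+1) / (1+u^2) from by ring,
    le_div_iff₀ h1]
  exact key

lemma integrableOn_inv_pow (l : ℕ) :
    IntegrableOn (fun x : ℝ => ((1+x^2)^(l+1))⁻¹) (Ioi 0) := by
  have hfun : (fun u : ℝ => u^(2*0) / (u^2+1)^(l+1)) = (fun u : ℝ => ((1+u^2)^(l+1))⁻¹) := by
    funext u
    norm_num [add_comm]
  rw [← hfun]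
  exact (integrable_pow_div one_pos 0 l (Nat.zero_le l)).integrableOn

lemma Vrec (l : ℕ) :
    (2*(l:ℝ)+2) * ∫ u in Ioi (0:ℝ), ((1+u^2)^(l+2))⁻¹
      = (2*(l:ℝ)+1) * ∫ u in Ioi (0:ℝ), ((1+u^2)^(l+1))⁻¹ := by
  set F : ℝ → ℝ := fun u => u * ((1+u^2)^(l+1))⁻¹ with hF
  set G : ℝ → ℝ := fun x =>
    (2*(l:ℝ)+2) * ((1+x^2)^(l+2))⁻¹ - (2*(l:ℝ)+1) * ((1+x^2)^(l+1))⁻¹ with hG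
  have hpos : ∀ x : ℝ, (0:ℝ) < 1 + x^2 := fun x => by positivity
  have hder : ∀ x : ℝ, HasDerivAt F (G x) x := by
    intro x
    have h1 : HasDerivAt (fun u : ℝ => 1+u^2) (2*x) x := by
      simpa using ((hasDerivAt_pow 2 x).const_add 1)
    have h2 : HasDerivAt (fun u : ℝ => (1+u^2)^(l+1))
        ((l+1 : ℕ) * (1+x^2)^l * (2*x)) x := by
      have := h1.pow (l+1); simp only [Nat.add_sub_cancel] at this; exact this
    have h3 := h2.inv (pow_ne_zero _ (hpos x).ne')
    have h4 := (hasDerivAt_id x).mul h3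
    refine h4.congr_deriv ?_
    have h5 : (1+x^2) ≠ 0 := (hpos x).ne'
    rw [hG]
    simp only [Pi.inv_apply, id]
    field_simp
    push_cast
    ring
  have hi1 : IntegrableOn (fun x : ℝ => ((1+x^2)^(l+2))⁻¹) (Ioi (0:ℝ)) :=
    integrableOn_inv_pow (l+1)
  have hi2 : IntegrableOn (fun x : ℝ => ((1+x^2)^(l+1))⁻¹) (Ioi (0:ℝ)) :=
    integrableOn_inv_pow l
  have hiG : IntegrableOn G (Ioi 0) := by
    apply Integrable.sub (hi1.const_mul _) (hi2.const_mul _)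
  have htend : Tendsto F atTop (nhds 0) := by
    apply squeeze_zero' (g := fun u : ℝ => u⁻¹)
    · filter_upwards [eventually_ge_atTop (1:ℝ)] with u hu
      have := hpos u
      positivity
    · filter_upwards [eventually_ge_atTop (1:ℝ)] with u hu
      show u * ((1+u^2)^(l+1))⁻¹ ≤ u⁻¹
      have h2 : u^2 ≤ (1+u^2)^(l+1) := by
        calc u^2 ≤ 1 + u^2 := by linarith
        _ = (1+u^2)^1 := (pow_one _).symm
        _ ≤ (1+u^2)^(l+1) := pow_le_pow_right₀ (by nlinarith) (by omega)
      rw [← div_eq_mul_inv, ← one_div u, div_le_div_iff₀ (by positivity) (by linarith)]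
      nlinarith
    · exact tendsto_inv_atTop_zero
  have hint := integral_Ioi_of_hasDerivAt_of_tendsto
    (f := F) (f' := G) (a := 0) (m := 0)
    (hder 0).continuousAt.continuousWithinAt (fun x _ => hder x) hiG htend
  have hF0 : F 0 = 0 := by simp [hF]
  rw [hF0, sub_zero] at hint
  have hsplit : ∫ x in Ioi (0:ℝ), G x
      = (2*(l:ℝ)+2) * (∫ x in Ioi (0:ℝ), ((1+x^2)^(l+2))⁻¹)
        - (2*(l:ℝ)+1) * (∫ x in Ioi (0:ℝ), ((1+x^2)^(l+1))⁻¹) := by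
    rw [hG]
    rw [integral_sub (hi1.const_mul _) (hi2.const_mul _),
      integral_const_mul, integral_const_mul]
  rw [hsplit] at hint
  linarith

lemma Vval (l : ℕ) : ∫ u in Ioi (0:ℝ), ((1+u^2)^(l+1))⁻¹
    = π/2 * (2*l).factorial / (4^l * l.factorial * l.factorial) := by
  induction l with
  | zero => simpa using integral_Ioi_inv_one_add_sq (i := 0)
  | succ l ih =>
    have h := Vrec l
    rw [ih] at h
    have hfac : ((2*(l+1)).factorial : ℝ)
        = (2*(l:ℝ)+2) * (2*(l:ℝ)+1) * (2*l).factorial := by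
      rw [show 2*(l+1) = (2*l+1)+1 from by ring, Nat.factorial_succ, Nat.factorial_succ]
      push_cast
      ring
    have hfac2 : ((l+1).factorial : ℝ) = ((l:ℝ)+1) * l.factorial := by
      rw [Nat.factorial_succ]; push_cast; ring
    have h5 : (l.factorial : ℝ) ≠ 0 := by positivity
    rw [show l+1+1 = l+2 from rfl, hfac, hfac2]
    set X := ∫ u in Ioi (0:ℝ), ((1+u^2)^(l+2))⁻¹ with hX
    rw [eq_div_iff (by positivity)]
    field_simp at h
    linear_combination ((l:ℝ)+1) * h

lemma integrableOn_pow_inv (j l : ℕ) (hj : j ≤ l) :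
    IntegrableOn (fun u : ℝ => u^(2*j)/(1+u^2)^(l+1)) (Ioi 0) := by
  have hfun : (fun u : ℝ => u^(2*j) / (u^2+1)^(l+1))
      = fun u : ℝ => u^(2*j)/(1+u^2)^(l+1) := by
    funext u; rw [add_comm]
  rw [← hfun]
  exact (integrable_pow_div one_pos j l hj).integrableOn

lemma Wval : ∀ j d : ℕ, ∫ u in Ioi (0:ℝ), u^(2*j) / (1+u^2)^(j+d+1)
    = π/2 * (2*j).factorial * (2*d).factorial
      / (4^(j+d) * j.factorial * d.factorial * (j+d).factorial) := by
  intro j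
  induction j with
  | zero =>
    intro d
    simp only [Nat.mul_zero, pow_zero, one_div, Nat.zero_add, Nat.factorial_zero,
      Nat.cast_one, mul_one, one_mul]
    rw [Vval d]
    try ring
  | succ j ih =>
    intro d
    have h1 : ∀ u : ℝ, (0:ℝ) < 1 + u^2 := fun u => by positivity
    have hfun : (fun u : ℝ => u^(2*(j+1)) / (1+u^2)^(j+1+d+1))
        = fun u : ℝ => u^(2*j)/(1+u^2)^(j+d+1) - u^(2*j)/(1+u^2)^(j+(d+1)+1) := by
      funext u
      have h2 : (1+u^2) ≠ 0 := (h1 u).ne'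
      rw [show j+1+d+1 = j+d+2 from by omega, show j+(d+1)+1 = j+d+2 from by omega]
      field_simp
      ring
    rw [hfun, integral_sub (integrableOn_pow_inv j (j+d) (by omega))
      (by simpa [IntegrableOn, show j+(d+1)+1 = (j+d+1)+1 from by omega]
        using integrableOn_pow_inv j (j+d+1) (by omega)),
      ih d, ih (d+1)]
    have e1 : ((2*(j+1)).factorial : ℝ)
        = (2*(j:ℝ)+2) * (2*(j:ℝ)+1) * (2*j).factorial := by
      rw [show 2*(j+1) = (2*j+1)+1 from by ring, Nat.factorial_succ, Nat.factorial_succ]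
      push_cast; ring
    have e2 : ((j+1).factorial : ℝ) = ((j:ℝ)+1) * j.factorial := by
      rw [Nat.factorial_succ]; push_cast; ring
    have e3 : ((j+1+d).factorial : ℝ) = ((j:ℝ)+(d:ℝ)+1) * (j+d).factorial := by
      rw [show j+1+d = (j+d)+1 from by omega, Nat.factorial_succ]; push_cast; ring
    have e4 : ((2*(d+1)).factorial : ℝ)
        = (2*(d:ℝ)+2) * (2*(d:ℝ)+1) * (2*d).factorial := by
      rw [show 2*(d+1) = (2*d+1)+1 from by ring, Nat.factorial_succ, Nat.factorial_succ]
      push_cast; ring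
    have e5 : ((d+1).factorial : ℝ) = ((d:ℝ)+1) * d.factorial := by
      rw [Nat.factorial_succ]; push_cast; ring
    have e6 : ((j+(d+1)).factorial : ℝ) = ((j:ℝ)+(d:ℝ)+1) * (j+d).factorial := by
      rw [show j+(d+1) = (j+d)+1 from by omega, Nat.factorial_succ]; push_cast; ring
    rw [e1, e2, e3, e4, e5, e6]
    rw [show j+1+d = (j+d)+1 from by omega, show j+(d+1) = (j+d)+1 from by omega]
    have n1 : ((j:ℝ)+1) ≠ 0 := by positivity
    have n2 : ((d:ℝ)+1) ≠ 0 := by positivity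
    have n3 : ((j:ℝ)+(d:ℝ)+1) ≠ 0 := by positivity
    have n4 : ((j+d).factorial : ℝ) ≠ 0 := by positivity
    have n5 : (j.factorial : ℝ) ≠ 0 := by positivity
    have n6 : (d.factorial : ℝ) ≠ 0 := by positivity
    have n7 : ((4:ℝ)^(j+d)) ≠ 0 := by positivity
    field_simp
    ring

lemma Wuniv {c : ℝ} (hc : 0 < c) (j l : ℕ) (hj : j ≤ l) :
    ∫ u : ℝ, u^(2*j)/(u^2+c)^(l+1)
      = 2 * Real.sqrt c * c^j / c^(l+1)
        * ∫ u in Ioi (0:ℝ), u^(2*j)/(1+u^2)^(l+1) := by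
  have hs : Real.sqrt c > 0 := Real.sqrt_pos.mpr hc
  have hss : Real.sqrt c ^ 2 = c := Real.sq_sqrt hc.le
  have h1 : ∫ u : ℝ, u^(2*j)/(u^2+c)^(l+1)
      = 2 * ∫ u in Ioi (0:ℝ), u^(2*j)/(u^2+c)^(l+1) := by
    rw [← integral_comp_abs (f := fun x : ℝ => x^(2*j)/(x^2+c)^(l+1))]
    congr 1
    funext x
    rw [pow_mul, pow_mul, sq_abs]
  have h2 : ∫ u in Ioi (0:ℝ), (fun x : ℝ => x^(2*j)/(x^2+c)^(l+1)) (Real.sqrt c * u)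
      = (Real.sqrt c)⁻¹ • ∫ u in Ioi (Real.sqrt c * 0), u^(2*j)/(u^2+c)^(l+1) :=
    integral_comp_mul_left_Ioi (fun x : ℝ => x^(2*j)/(x^2+c)^(l+1)) 0 hs
  rw [mul_zero] at h2
  have h3 : ∀ u : ℝ, (Real.sqrt c * u)^(2*j)/((Real.sqrt c * u)^2+c)^(l+1)
      = (c^j / c^(l+1)) * (u^(2*j)/(1+u^2)^(l+1)) := by
    intro u
    have hd : (0:ℝ) < 1 + u^2 := by positivity
    rw [mul_pow, pow_mul, hss, mul_pow, hss]
    rw [show c * u^2 + c = c * (1+u^2) from by ring, mul_pow]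
    rw [pow_mul]
    field_simp
    try ring
  simp only [h3] at h2
  rw [integral_const_mul] at h2
  rw [smul_eq_mul] at h2
  have hinv : Real.sqrt c * (Real.sqrt c)⁻¹ = 1 := mul_inv_cancel₀ hs.ne'
  rw [h1]
  linear_combination (-(2*Real.sqrt c)) * h2
    - (2 * ∫ u in Ioi (0:ℝ), u^(2*j)/(u^2+c)^(l+1)) * hinv

open MeasureTheory Real Set Filter

lemma inv_subst (g : ℝ → ℝ) :
    ∫ z in Ioi (0:ℝ), (z^2)⁻¹ * g z⁻¹ = ∫ z in Ioi (0:ℝ), g z := by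
  have himg : (fun z : ℝ => z⁻¹) '' (Ioi 0) = Ioi 0 := by
    ext y
    constructor
    · rintro ⟨x, hx, rfl⟩
      exact mem_Ioi.mpr (inv_pos.mpr (mem_Ioi.mp hx))
    · intro hy
      exact ⟨y⁻¹, mem_Ioi.mpr (inv_pos.mpr (mem_Ioi.mp hy)), by simp⟩
  have hderiv : ∀ x ∈ Ioi (0:ℝ),
      HasDerivWithinAt (fun z : ℝ => z⁻¹) (-(x^2)⁻¹) (Ioi 0) x := by
    intro x hx
    exact (hasDerivAt_inv (ne_of_gt hx)).hasDerivWithinAt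
  have hinj : InjOn (fun z : ℝ => z⁻¹) (Ioi 0) := inv_injective.injOn
  have h := integral_image_eq_integral_abs_deriv_smul measurableSet_Ioi hderiv hinj g
  rw [himg] at h
  rw [h]
  apply setIntegral_congr_fun measurableSet_Ioi
  intro x hx
  have : |(-(x^2)⁻¹)| = (x^2)⁻¹ := by
    rw [abs_neg, abs_of_nonneg]
    positivity
  simp only [smul_eq_mul, this]

lemma phi_image : (fun z : ℝ => z - z⁻¹) '' (Ioi 0) = univ := by
  apply eq_univ_of_forall
  intro u
  set s := Real.sqrt (u^2+4) with hs
  have hs2 : s^2 = u^2+4 := Real.sq_sqrt (by positivity)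
  have habs : |u| < s := by
    rw [hs, ← Real.sqrt_sq_eq_abs]
    exact Real.sqrt_lt_sqrt (sq_nonneg u) (by linarith)
  have hz0 : 0 < (u + s)/2 := by
    have := neg_abs_le u
    linarith [habs]
  refine ⟨(u+s)/2, hz0, ?_⟩
  have hne : u + s ≠ 0 := by
    have : 0 < u + s := by linarith
    exact ne_of_gt this
  show (u+s)/2 - ((u+s)/2)⁻¹ = u
  field_simp
  linear_combination hs2

lemma phi_subst (g : ℝ → ℝ) :
    ∫ x : ℝ, g x = ∫ z in Ioi (0:ℝ), (1 + (z^2)⁻¹) * g (z - z⁻¹) := by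
  have hderiv : ∀ x ∈ Ioi (0:ℝ),
      HasDerivWithinAt (fun z : ℝ => z - z⁻¹) (1 + (x^2)⁻¹) (Ioi 0) x := by
    intro x hx
    have h := (hasDerivAt_id x).sub (hasDerivAt_inv (ne_of_gt hx))
    have : (1 : ℝ) - (-(x^2)⁻¹) = 1 + (x^2)⁻¹ := by ring
    rw [this] at h
    exact h.hasDerivWithinAt
  have hinj : InjOn (fun z : ℝ => z - z⁻¹) (Ioi 0) := by
    intro x hx y hy hxy
    by_contra hne
    rcases lt_or_gt_of_ne hne with h | h
    · have h2 : y⁻¹ < x⁻¹ := by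
        apply inv_strictAnti₀ hx h
      have : x - x⁻¹ < y - y⁻¹ := by
        simp only [mem_Ioi] at hx hy
        linarith
      simp only at hxy
      linarith [hxy.le, this]
    · have h2 : x⁻¹ < y⁻¹ := by
        apply inv_strictAnti₀ hy h
      have : y - y⁻¹ < x - x⁻¹ := by
        simp only [mem_Ioi] at hx hy
        linarith
      simp only at hxy
      linarith [hxy.ge, this]
  have h := integral_image_eq_integral_abs_deriv_smul measurableSet_Ioi hderiv hinj g
  rw [phi_image] at h
  rw [← setIntegral_univ, h]
  apply setIntegral_congr_fun measurableSet_Ioi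
  intro x hx
  have hx0 : (0:ℝ) < x := hx
  have : |1 + (x^2)⁻¹| = 1 + (x^2)⁻¹ := by
    rw [abs_of_nonneg]
    positivity
  simp only [smul_eq_mul, this]

lemma ringChoose_eq (k j : ℕ) : Ring.choose ((j:ℝ) - ((k:ℝ)+1)) (2*j) = ((k+j).choose (2*j) : ℝ) := by
  have h := Ring.descPochhammer_eq_factorial_smul_choose (R := ℝ) ((j:ℝ) - ((k:ℝ)+1)) (2*j)
  have hsm : (descPochhammer ℤ (2*j)).smeval ((j:ℝ) - ((k:ℝ)+1))
      = (descPochhammer ℝ (2*j)).eval ((j:ℝ) - ((k:ℝ)+1)) := by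
    rw [← Polynomial.aeval_eq_smeval, Polynomial.aeval_def,
      ← descPochhammer_map (Int.castRingHom ℝ), Polynomial.eval_map]
    rfl
  rw [hsm, descPochhammer_eval_eq_ascPochhammer] at h
  have e1 : (j:ℝ) - ((k:ℝ)+1) - (2*j : ℕ) + 1 = -(((k+j : ℕ)):ℝ) := by push_cast; ring
  rw [e1, ascPochhammer_eval_neg_eq_descPochhammer, descPochhammer_eval_eq_descFactorial] at h
  have e2 : ((k+j).descFactorial (2*j) : ℝ) = ((2*j).factorial : ℝ) * ((k+j).choose (2*j) : ℝ) := by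
    rw [Nat.descFactorial_eq_factorial_mul_choose]; push_cast; ring
  rw [e2] at h
  have hfac : ((2*j).factorial : ℝ) ≠ 0 := by positivity
  have := h
  rw [nsmul_eq_mul] at this
  have : Ring.choose ((j:ℝ) - ((k:ℝ)+1)) (2*j) = ((k+j).choose (2*j) : ℝ) := by
    rw [pow_mul, neg_one_sq, one_pow, one_mul] at this
    exact (mul_left_cancel₀ hfac this).symm
  exact this

lemma integrableOn_quartic {a : ℝ} (ha : -1 < a) (m s : ℕ) (hs : s ≤ 2*m+1) :
    IntegrableOn (fun z : ℝ => z^(2*s)/(z^4+2*a*z^2+1)^(m+1)) (Ioi 0) := by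
  have h1a : (0:ℝ) < 1+a := by linarith
  set e : ℝ := min 1 ((1+a)/2) with he
  have he0 : 0 < e := lt_min one_pos (by linarith)
  have he1 : e ≤ 1 := min_le_left _ _
  have he2 : e ≤ (1+a)/2 := min_le_right _ _
  have hq : ∀ z : ℝ, e*((1+z^2)^2)^(1:ℕ) ≤ (z^4+2*a*z^2+1) := by
    intro z
    simp only [pow_one]
    nlinarith [sq_nonneg (z^2-1), sq_nonneg z, sq_nonneg (1+z^2)]
  have hqpos : ∀ z : ℝ, 0 < z^4+2*a*z^2+1 := by
    intro z
    have h12 : (1:ℝ) ≤ (1+z^2)^2 := by nlinarith [sq_nonneg z]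
    have h13 : e ≤ e*(1+z^2)^2 := by nlinarith [mul_le_mul_of_nonneg_left h12 he0.le]
    have h14 := hq z
    simp only [pow_one] at h14
    linarith
  have hcont : Continuous fun z : ℝ => z^(2*s)/(z^4+2*a*z^2+1)^(m+1) := by
    apply Continuous.div (by fun_prop) (by fun_prop)
    intro z
    exact pow_ne_zero _ (hqpos z).ne'
  apply (Integrable.mono (integrable_inv_one_add_sq.const_mul ((e^(m+1))⁻¹))
    hcont.aestronglyMeasurable ?_).integrableOn
  filter_upwards with z
  have h1 : (0:ℝ) < 1 + z^2 := by positivity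
  have hz2 : (0:ℝ) ≤ z^(2*s) := by rw [pow_mul]; positivity
  have key : e^(m+1) * (z^(2*s) * (1+z^2)) ≤ (z^4+2*a*z^2+1)^(m+1) := by
    have step1 : z^(2*s) * (1+z^2) ≤ ((1+z^2)^2)^(m+1) := by
      calc z^(2*s) * (1+z^2) = (z^2)^s * (1+z^2) := by rw [pow_mul]
      _ ≤ (1+z^2)^s * (1+z^2) := by
          apply mul_le_mul_of_nonneg_right _ h1.le
          exact pow_le_pow_left₀ (sq_nonneg z) (by nlinarith [sq_nonneg z]) s
      _ = (1+z^2)^(s+1) := by ring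
      _ ≤ (1+z^2)^(2*m+2) := pow_le_pow_right₀ (by nlinarith [sq_nonneg z]) (by omega)
      _ = ((1+z^2)^2)^(m+1) := by rw [← pow_mul, show 2*(m+1) = 2*m+2 from by omega]
    calc e^(m+1) * (z^(2*s) * (1+z^2)) ≤ e^(m+1) * ((1+z^2)^2)^(m+1) := by
          apply mul_le_mul_of_nonneg_left step1 (by positivity)
    _ = (e * (1+z^2)^2)^(m+1) := by rw [mul_pow]
    _ ≤ (z^4+2*a*z^2+1)^(m+1) := by
        apply pow_le_pow_left₀ (by positivity)
        simpa using hq z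
  have hem : (0:ℝ) < e^(m+1) := pow_pos he0 _
  rw [Real.norm_eq_abs, Real.norm_eq_abs,
    abs_of_nonneg (div_nonneg hz2 (pow_nonneg (hqpos z).le _)),
    abs_of_nonneg (mul_nonneg (inv_nonneg.mpr hem.le) (by positivity))]
  rw [div_le_iff₀ (pow_pos (hqpos z) _),
    show (e^(m+1))⁻¹ * (1+z^2)⁻¹ * (z^4+2*a*z^2+1)^(m+1)
      = (z^4+2*a*z^2+1)^(m+1) / (e^(m+1) * (1+z^2)) from by
        rw [div_eq_mul_inv, mul_inv]
        ring,
    le_div_iff₀ (mul_pos hem h1)]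
  calc z^(2*s) * (e^(m+1) * (1+z^2)) = e^(m+1) * (z^(2*s) * (1+z^2)) := by ring
  _ ≤ (z^4+2*a*z^2+1)^(m+1) := key

lemma numer_identity (k : ℕ) (z : ℝ) (hz : z ≠ 0) :
    z^(2*k) + (z^2)⁻¹*(z⁻¹)^(2*k)
      = (1+(z^2)⁻¹) * ∑ j ∈ Finset.range (k+1),
          ((k+j).choose (2*j) : ℝ) * (z-z⁻¹)^(2*j) := by
  set S := ∑ j ∈ Finset.range (k+1), ((k+j).choose (2*j) : ℝ) * (z-z⁻¹)^(2*j) with hS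
  have hsum : z^(2*k) * S = Apoly k (z^2) := by
    rw [hS]
    unfold Apoly
    rw [Finset.mul_sum]
    apply Finset.sum_congr rfl
    intro j hj
    simp only [Finset.mem_range] at hj
    have hjk : j ≤ k := by omega
    have hzz : z - z⁻¹ = (z^2-1)/z := by field_simp
    rw [hzz, div_pow, show 2*k = 2*j + 2*(k-j) from by omega, pow_add, ← pow_mul]
    have hzp : z^(2*j) ≠ 0 := pow_ne_zero _ hz
    field_simp
  have hav := Aval k (z^2)
  have h2 : z^(2*k+2) * ((1+(z^2)⁻¹) * S) = (z^2+1) * (z^(2*k) * S) := by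
    rw [show 2*k+2 = 2+2*k from by omega, pow_add]
    field_simp
  have h1 : z^(2*k+2) * ((z^2)⁻¹*(z⁻¹)^(2*k)) = 1 := by
    rw [inv_pow, show 2*k+2 = 2+2*k from by omega, pow_add]
    field_simp
  have key : z^(2*k+2) * (z^(2*k) + (z^2)⁻¹*(z⁻¹)^(2*k)) = z^(2*k+2) * ((1+(z^2)⁻¹) * S) := by
    calc z^(2*k+2) * (z^(2*k) + (z^2)⁻¹*(z⁻¹)^(2*k))
        = z^(2*k+2)*z^(2*k) + z^(2*k+2)*((z^2)⁻¹*(z⁻¹)^(2*k)) := by ring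
    _ = (z^2)^(2*k+1) + 1 := by
        rw [h1, ← pow_add, ← pow_mul]
        congr 2
        omega
    _ = (z^2+1) * Apoly k (z^2) := hav.symm
    _ = (z^2+1) * (z^(2*k) * S) := by rw [hsum]
    _ = z^(2*k+2) * ((1+(z^2)⁻¹)*S) := h2.symm
  exact mul_left_cancel₀ (pow_ne_zero _ hz) key

lemma rpow_nat_add_half {x : ℝ} (hx : 0 < x) (p : ℕ) :
    x^((p:ℝ)+1/2) = x^p * Real.sqrt x := by
  rw [Real.rpow_add hx, Real.rpow_natCast]
  congr 1
  rw [Real.sqrt_eq_rpow]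

theorem quartic_integral_high (m n : ℕ) (hn1 : m + 1 ≤ n) (hn2 : n ≤ 2 * m + 1)
    (a : ℝ) (ha : -1 < a) :
    ∫ z in Set.Ioi (0 : ℝ), z ^ (2 * n) / (z ^ 4 + 2 * a * z ^ 2 + 1) ^ (m + 1)
      = Real.pi / ((2 : ℝ) ^ (3 * (m : ℝ) + 3 / 2) * (1 + a) ^ ((m : ℝ) + 1 / 2))
        * ∑ j ∈ Finset.range (n - m - 1 + 1),
            2 ^ j * (1 + a) ^ j * Nat.choose (2 * m - 2 * j) (m - j)
              * (Ring.choose ((m : ℝ) - n + j) (2 * j))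
              * Nat.choose (2 * j) j * (Nat.choose m j : ℝ)⁻¹ := by
  have h1a : (0:ℝ) < 1 + a := by linarith
  set c : ℝ := 2*(1+a) with hcdef
  have hc : (0:ℝ) < c := by rw [hcdef]; linarith
  set k : ℕ := n - m - 1 with hkdef
  have hnk : n = m + 1 + k := by omega
  have hkm : k ≤ m := by omega
  set f1 : ℝ → ℝ := fun z => z^(2*k)/((z-z⁻¹)^2+c)^(m+1) with hf1
  set f2 : ℝ → ℝ := fun z => ((z^2)⁻¹*(z⁻¹)^(2*k))/((z-z⁻¹)^2+c)^(m+1) with hf2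
  set G : ℝ → ℝ := fun u => ∑ j ∈ Finset.range (k+1),
    ((k+j).choose (2*j):ℝ) * (u^(2*j) / (u^2+c)^(m+1)) with hG
  have hDpos : ∀ z : ℝ, (0:ℝ) < (z-z⁻¹)^2+c := fun z => by positivity
  have hfacq : ∀ z : ℝ, z ≠ 0 → z^4+2*a*z^2+1 = z^2*((z-z⁻¹)^2+c) := by
    intro z hz0
    rw [hcdef]
    field_simp
    ring
  have hpt1 : ∀ z ∈ Set.Ioi (0:ℝ),
      z^(2*n)/(z^4+2*a*z^2+1)^(m+1) = f1 z := by
    intro z hz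
    have hz0 : z ≠ 0 := ne_of_gt hz
    simp only [hf1]
    rw [hfacq z hz0, mul_pow, show 2*n = 2*m+2+2*k from by omega, pow_add,
      show (z^2)^(m+1) = z^(2*m+2) from by
        rw [← pow_mul, show 2*(m+1)=2*m+2 from by omega]]
    exact mul_div_mul_left _ _ (pow_ne_zero _ hz0)
  have e1 : ∫ z in Set.Ioi (0:ℝ), z^(2*n)/(z^4+2*a*z^2+1)^(m+1)
      = ∫ z in Set.Ioi (0:ℝ), f1 z :=
    setIntegral_congr_fun measurableSet_Ioi hpt1
  have e2 : ∫ z in Set.Ioi (0:ℝ), f1 z = ∫ z in Set.Ioi (0:ℝ), f2 z := by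
    rw [← inv_subst f1]
    apply setIntegral_congr_fun measurableSet_Ioi
    intro z hz
    simp only [hf1, hf2]
    rw [inv_inv, show (z⁻¹ - z)^2 = (z - z⁻¹)^2 from by ring]
    ring
  have hint1 : IntegrableOn f1 (Set.Ioi 0) := by
    have h := integrableOn_quartic ha m n (by omega)
    exact h.congr_fun hpt1 measurableSet_Ioi
  have hint2 : IntegrableOn f2 (Set.Ioi 0) := by
    have h := integrableOn_quartic ha m (m-k) (by omega)
    apply h.congr_fun ?_ measurableSet_Ioi
    intro z hz
    have hz0 : z ≠ 0 := ne_of_gt hz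
    simp only [hf2]
    rw [hfacq z hz0, mul_pow,
      show (z^2)^(m+1) = z^(2*m+2) from by
        rw [← pow_mul, show 2*(m+1)=2*m+2 from by omega]]
    rw [show ((z^2)⁻¹*(z⁻¹)^(2*k)) = z^(2*(m-k)) / z^(2*m+2) from by
      rw [inv_pow, eq_div_iff (pow_ne_zero _ hz0)]
      rw [show (2:ℕ)*(m-k) = 2*m+2 - (2+2*k) from by omega,
        pow_sub₀ _ hz0 (by omega : 2+2*k ≤ 2*m+2), pow_add]
      field_simp
      rw [pow_add]]
    rw [div_div]
  have e3 : (∫ z in Set.Ioi (0:ℝ), f1 z) + (∫ z in Set.Ioi (0:ℝ), f1 z)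
      = ∫ u : ℝ, G u := by
    nth_rewrite 2 [e2]
    rw [← integral_add hint1 hint2, phi_subst G]
    apply setIntegral_congr_fun measurableSet_Ioi
    intro z hz
    have hz0 : z ≠ 0 := ne_of_gt hz
    simp only [hf1, hf2, hG]
    rw [← add_div, numer_identity k z hz0, mul_div_assoc]
    congr 1
    rw [Finset.sum_div]
    apply Finset.sum_congr rfl
    intro j hj
    rw [mul_div_assoc]
  have e4 : ∫ u : ℝ, G u = ∑ j ∈ Finset.range (k+1),
      ((k+j).choose (2*j):ℝ) * ∫ u : ℝ, u^(2*j)/(u^2+c)^(m+1) := by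
    simp only [hG]
    rw [MeasureTheory.integral_finset_sum]
    · apply Finset.sum_congr rfl
      intro j hj
      exact MeasureTheory.integral_const_mul _ _
    · intro j hj
      simp only [Finset.mem_range] at hj
      exact ((integrable_pow_div hc j m (by omega)).const_mul _)
  have e5 : ∀ j, j ≤ m → (∫ u : ℝ, u^(2*j)/(u^2+c)^(m+1))
      = 2 * ((Real.sqrt c * c^j / c^(m+1)) * (π/2 * (2*j).factorial * (2*(m-j)).factorial
          / (4^m * j.factorial * (m-j).factorial * m.factorial))) := by
    intro j hj
    rw [Wuniv hc j m hj]
    have hw := Wval j (m-j)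
    rw [show j+(m-j) = m from by omega] at hw
    rw [hw]
    ring
  set T : ℝ := ∑ j ∈ Finset.range (k+1), ((k+j).choose (2*j):ℝ) *
      ((Real.sqrt c * c^j / c^(m+1)) * (π/2 * (2*j).factorial * (2*(m-j)).factorial
        / (4^m * j.factorial * (m-j).factorial * m.factorial))) with hT
  have e6 : (∫ z in Set.Ioi (0:ℝ), f1 z) = T := by
    have h2T : (∫ z in Set.Ioi (0:ℝ), f1 z) + (∫ z in Set.Ioi (0:ℝ), f1 z) = 2 * T := by
      rw [e3, e4, hT, Finset.mul_sum]
      apply Finset.sum_congr rfl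
      intro j hj
      simp only [Finset.mem_range] at hj
      rw [e5 j (by omega)]
      ring
    linarith
  rw [e1, e6, Finset.mul_sum, hT]
  apply Finset.sum_congr rfl
  intro j hj
  simp only [Finset.mem_range] at hj
  have hjk : j ≤ k := by omega
  have hjm : j ≤ m := by omega
  have hrc : Ring.choose ((m:ℝ) - (n:ℝ) + (j:ℝ)) (2*j) = ((k+j).choose (2*j) : ℝ) := by
    rw [show (m:ℝ) - (n:ℝ) + (j:ℝ) = (j:ℝ) - ((k:ℝ)+1) from by
      rw [hnk]; push_cast; ring]
    exact ringChoose_eq k j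
  rw [hrc]
  have hb1 : ((2*j).factorial : ℝ)
      = ((2*j).choose j : ℝ) * j.factorial * j.factorial := by
    have h := Nat.choose_mul_factorial_mul_factorial (show j ≤ 2*j from by omega)
    rw [show 2*j - j = j from by omega] at h
    exact_mod_cast congrArg (Nat.cast : ℕ → ℝ) h.symm
  have hb2 : ((2*(m-j)).factorial : ℝ)
      = ((2*m-2*j).choose (m-j) : ℝ) * (m-j).factorial * (m-j).factorial := by
    have h := Nat.choose_mul_factorial_mul_factorial (show (m-j) ≤ 2*(m-j) from by omega)
    rw [show 2*(m-j) - (m-j) = m-j from by omega,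
      show (2*(m-j)).choose (m-j) = (2*m-2*j).choose (m-j) from by
        rw [show 2*(m-j) = 2*m-2*j from by omega]] at h
    exact_mod_cast congrArg (Nat.cast : ℕ → ℝ) h.symm
  have hb3 : (m.factorial : ℝ) = (m.choose j : ℝ) * j.factorial * (m-j).factorial := by
    have h := Nat.choose_mul_factorial_mul_factorial hjm
    exact_mod_cast congrArg (Nat.cast : ℕ → ℝ) h.symm
  have hs2 : (Real.sqrt 2)^2 = 2 := Real.sq_sqrt (by norm_num)
  have hsa : (Real.sqrt (1+a))^2 = 1+a := Real.sq_sqrt h1a.le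
  have hs2pos : 0 < Real.sqrt 2 := Real.sqrt_pos.mpr (by norm_num)
  have hsapos : 0 < Real.sqrt (1+a) := Real.sqrt_pos.mpr h1a
  have hcs : Real.sqrt c = Real.sqrt 2 * Real.sqrt (1+a) := by
    rw [hcdef, Real.sqrt_mul (by norm_num : (0:ℝ) ≤ 2)]
  have hr2 : (2:ℝ)^(3*(m:ℝ)+3/2) = 2^(3*m+1) * Real.sqrt 2 := by
    rw [show 3*(m:ℝ)+3/2 = ((3*m+1 : ℕ):ℝ)+1/2 from by push_cast; ring]
    exact rpow_nat_add_half two_pos (3*m+1)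
  have hra : (1+a)^((m:ℝ)+1/2) = (1+a)^m * Real.sqrt (1+a) := rpow_nat_add_half h1a m
  have h4m : (4:ℝ)^m = (Real.sqrt 2)^(4*m) := by
    rw [pow_mul, show (Real.sqrt 2)^4 = 4 from by
      rw [show (4:ℕ) = 2*2 from rfl, pow_mul, hs2]; norm_num]
  rw [hr2, hra, hcs, hb1, hb2, hb3, h4m, hcdef]
  set s2 : ℝ := Real.sqrt 2 with hs2def
  set sa : ℝ := Real.sqrt (1+a) with hsadef
  rw [← hs2, ← hsa]
  have n1 : s2 ≠ 0 := ne_of_gt hs2pos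
  have n2 : sa ≠ 0 := ne_of_gt hsapos
  have n3 : (j.factorial : ℝ) ≠ 0 := by positivity
  have n4 : ((m-j).factorial : ℝ) ≠ 0 := by positivity
  have n5 : ((m.choose j : ℕ) : ℝ) ≠ 0 := by
    exact_mod_cast (Nat.choose_pos hjm).ne'
  field_simp
  ring
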